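/- Under the same hypotheses (irreducible transient substochastic chain on E, E⋆u ⊆ E, p(x⋆u,y⋆u) ≥ p(x,y), and Q(x, x⋆u) ≥ δ > 0 for all x), if g : E → ℝ₊ is a potential function (i.e. g = Gφ for some nonnegative φ, equivalently g is superharmonic with lim_n Pⁿg = 0 pointwise), then T_u g is also a potential function, namely T_u g = Gψ with ψ = (I − P) T_u g. -/

import Mathlib

open scoped ENNReal Classical BigOperators
open Filter

noncomputable section

namespace RW

variable {G : Type*}

/-- One-step transition operator `Pφ(x) = Σ_y p(x,y) φ(y)`. -/
def kapp (p : G → G → ℝ≥0∞) (φ : G → ℝ≥0∞) (x : G) : ℝ≥0∞ := ∑' y, p x y * φ y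

/-- n-step transition kernel. -/
def kiter (p : G → G → ℝ≥0∞) : ℕ → G → G → ℝ≥0∞
  | 0 => fun x y => if x = y then 1 else 0
  | n + 1 => fun x y => ∑' z, p x z * kiter p n z y

/-- Green function `G(x,y) = Σ_t ℙ_x(X(t)=y)`. -/
def green (p : G → G → ℝ≥0∞) (x y : G) : ℝ≥0∞ := ∑' n, kiter p n x y

/-- Green operator `Gφ(x) = Σ_y G(x,y) φ(y)`. -/
def greenApp (p : G → G → ℝ≥0∞) (φ : G → ℝ≥0∞) (x : G) : ℝ≥0∞ := ∑' y, green p x y * φ y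

/-- Probability of first hitting `y` at time `n ≥ 1`. -/
def fhit (p : G → G → ℝ≥0∞) : ℕ → G → G → ℝ≥0∞
  | 0 => fun _ _ => 0
  | 1 => p
  | n + 2 => fun x y => ∑' z, if z = y then 0 else p x z * fhit p (n + 1) z y

/-- Hitting probability `Q(x,y) = ℙ_x(∃ t ≥ 1, X(t) = y)`. -/
def hitProb (p : G → G → ℝ≥0∞) (x y : G) : ℝ≥0∞ := ∑' n, fhit p n x y

/-- Survival probability `ℙ_x(τ_ϑ > n)`. -/
def surv (p : G → G → ℝ≥0∞) (n : ℕ) (x : G) : ℝ≥0∞ := ∑' y, kiter p n x y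

/-- Expected lifetime `𝔼_x(τ_ϑ) = Σ_n ℙ_x(τ_ϑ > n)`. -/
def gexp (p : G → G → ℝ≥0∞) (x : G) : ℝ≥0∞ := ∑' n, surv p n x

variable [Group G]

/-- Matrix coefficients `a_u(x,y)` of the operator `A_u = T_u P - P T_u`. -/
def acoef (p : G → G → ℝ≥0∞) (E : Set G) (u x y : G) : ℝ≥0∞ :=
  if y * u⁻¹ ∈ E then p (x * u) y - p x (y * u⁻¹) else p (x * u) y

/-- The operator `A_u φ(x) = Σ_y a_u(x,y) φ(y)`. -/
def Aop (p : G → G → ℝ≥0∞) (E : Set G) (u : G) (φ : G → ℝ≥0∞) (x : G) : ℝ≥0∞ :=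
  ∑' y, acoef p E u x y * φ y

/-- Ladder height transition kernel `p_H(x,y) = G A_x 𝟙_{y}(e)`. -/
def ladder (p : G → G → ℝ≥0∞) (E : Set G) (x y : G) : ℝ≥0∞ :=
  ∑' z, green p 1 z * acoef p E x z y

/-- The renewal function `V(x) = 𝔼_x(𝒯_ϑ)` of the ladder height process. -/
def V (p : G → G → ℝ≥0∞) (E : Set G) (x : G) : ℝ≥0∞ :=
  ∑' n, surv (ladder p E) n x

end RW

end

open RW

section Aux

variable {G : Type*} (p : G → G → ℝ≥0∞)

/-- n-step operator `Pⁿφ(x) = Σ_y pⁿ(x,y) φ(y)`. -/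
noncomputable def Papp (n : ℕ) (φ : G → ℝ≥0∞) (x : G) : ℝ≥0∞ :=
  ∑' y, kiter p n x y * φ y

lemma Papp_zero (φ : G → ℝ≥0∞) (x : G) : Papp p 0 φ x = φ x := by
  unfold Papp kiter
  rw [tsum_eq_single x]
  · simp
  · intro y hy
    simp [Ne.symm hy]

lemma Papp_succ (n : ℕ) (φ : G → ℝ≥0∞) (x : G) :
    Papp p (n + 1) φ x = kapp p (Papp p n φ) x := by
  simp only [Papp, kapp, kiter]
  calc ∑' y, (∑' z, p x z * kiter p n z y) * φ y
      = ∑' y, ∑' z, p x z * kiter p n z y * φ y := by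
        simp [ENNReal.tsum_mul_right]
    _ = ∑' z, ∑' y, p x z * kiter p n z y * φ y := ENNReal.tsum_comm
    _ = ∑' z, p x z * ∑' y, kiter p n z y * φ y := by
        simp [mul_assoc, ENNReal.tsum_mul_left]

lemma Papp_one (φ : G → ℝ≥0∞) (x : G) : Papp p 1 φ x = kapp p φ x := by
  rw [Papp_succ]
  exact tsum_congr fun y => by rw [Papp_zero]

lemma Papp_congr {f g : G → ℝ≥0∞} (h : ∀ y, f y = g y) (n : ℕ) (x : G) :
    Papp p n f x = Papp p n g x :=
  tsum_congr fun y => by rw [h y]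

lemma Papp_comm (n : ℕ) (φ : G → ℝ≥0∞) (x : G) :
    Papp p n (kapp p φ) x = kapp p (Papp p n φ) x := by
  induction n generalizing x with
  | zero =>
    rw [Papp_zero]
    exact tsum_congr fun y => by rw [Papp_zero]
  | succ n ih =>
    rw [Papp_succ]
    calc kapp p (Papp p n (kapp p φ)) x
        = kapp p (kapp p (Papp p n φ)) x := tsum_congr fun y => by rw [ih]
      _ = kapp p (Papp p (n + 1) φ) x := tsum_congr fun y => by rw [Papp_succ]

lemma Papp_add (n m : ℕ) (φ : G → ℝ≥0∞) (x : G) :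
    Papp p n (Papp p m φ) x = Papp p (n + m) φ x := by
  induction n generalizing x with
  | zero => rw [Papp_zero]; norm_num
  | succ n ih =>
    rw [Papp_succ]
    have : n + 1 + m = (n + m) + 1 := by omega
    rw [this, Papp_succ]
    exact tsum_congr fun y => by rw [ih]

lemma green_tsum (φ : G → ℝ≥0∞) (x : G) :
    greenApp p φ x = ∑' n, Papp p n φ x := by
  simp only [greenApp, green, Papp]
  calc ∑' y, (∑' n, kiter p n x y) * φ y
      = ∑' y, ∑' n, kiter p n x y * φ y := by
        simp [ENNReal.tsum_mul_right]
    _ = ∑' n, ∑' y, kiter p n x y * φ y := ENNReal.tsum_comm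

lemma Papp_green (n : ℕ) (φ : G → ℝ≥0∞) (x : G) :
    Papp p n (greenApp p φ) x = ∑' m, Papp p (n + m) φ x := by
  calc Papp p n (greenApp p φ) x
      = Papp p n (fun y => ∑' m, Papp p m φ y) x :=
        Papp_congr p (fun y => green_tsum p φ y) n x
    _ = ∑' y, ∑' m, kiter p n x y * Papp p m φ y := by
        simp only [Papp]
        exact tsum_congr fun y => (ENNReal.tsum_mul_left).symm
    _ = ∑' m, ∑' y, kiter p n x y * Papp p m φ y := ENNReal.tsum_comm
    _ = ∑' m, Papp p (n + m) φ x := tsum_congr fun m => Papp_add p n m φ x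

lemma kiter_mem {E : Set G} (hsupp : ∀ x y, p x y ≠ 0 → x ∈ E ∧ y ∈ E) :
    ∀ n x y, x ∈ E → kiter p n x y ≠ 0 → y ∈ E := by
  intro n
  induction n with
  | zero =>
    intro x y hx hne
    simp only [kiter] at hne
    by_cases hxy : x = y
    · exact hxy ▸ hx
    · simp [hxy] at hne
  | succ n ih =>
    intro x y hx hne
    simp only [kiter] at hne
    obtain ⟨z, hz⟩ : ∃ z, p x z * kiter p n z y ≠ 0 := by
      by_contra hc
      push_neg at hc
      exact hne (by simp [hc])
    have hp : p x z ≠ 0 := fun h => hz (by simp [h])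
    have hk : kiter p n z y ≠ 0 := fun h => hz (by simp [h])
    exact ih z y (hsupp x z hp).2 hk

section Grp

variable [Group G] {E : Set G} {u : G}

lemma kiter_mono (hsupp : ∀ x y, p x y ≠ 0 → x ∈ E ∧ y ∈ E)
    (hmono : ∀ x ∈ E, ∀ y ∈ E, p x y ≤ p (x * u) (y * u)) :
    ∀ n x y, kiter p n x y ≤ kiter p n (x * u) (y * u) := by
  intro n
  induction n with
  | zero =>
    intro x y
    simp only [kiter]
    by_cases hxy : x = y
    · simp [hxy]
    · rw [if_neg hxy, if_neg (fun h => hxy (mul_right_cancel h))]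
  | succ n ih =>
    intro x y
    simp only [kiter]
    refine ENNReal.summable.tsum_le_tsum_of_inj (· * u) (mul_left_injective u)
      (fun c _ => zero_le) (fun z => ?_) ENNReal.summable
    have hp : p x z ≤ p (x * u) (z * u) := by
      by_cases hz : p x z = 0
      · simp [hz]
      · exact hmono x (hsupp x z hz).1 z (hsupp x z hz).2
    exact mul_le_mul' hp (ih z y)

lemma Papp_mono_u (hsupp : ∀ x y, p x y ≠ 0 → x ∈ E ∧ y ∈ E)
    (hmono : ∀ x ∈ E, ∀ y ∈ E, p x y ≤ p (x * u) (y * u))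
    (f : G → ℝ≥0∞) (n : ℕ) (x : G) :
    Papp p n (fun w => f (w * u)) x ≤ Papp p n f (x * u) := by
  simp only [Papp]
  refine ENNReal.summable.tsum_le_tsum_of_inj (· * u) (mul_left_injective u)
    (fun c _ => zero_le) (fun y => ?_) ENNReal.summable
  exact mul_le_mul' (kiter_mono p hsupp hmono n x y) le_rfl

end Grp

end Aux


theorem statement2 {G : Type*} [Group G] [Countable G]
    (p : G → G → ℝ≥0∞) (E : Set G)
    (hsupp : ∀ x y, p x y ≠ 0 → x ∈ E ∧ y ∈ E)
    (hsub : ∀ x, (∑' y, p x y) ≤ 1)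
    (hirr : ∀ x ∈ E, ∀ y ∈ E, 0 < hitProb p x y)
    (htrans : ∀ x ∈ E, green p x x < ⊤)
    (u : G) (hu : u ∈ E)
    (hEu : ∀ x ∈ E, x * u ∈ E)
    (hmono : ∀ x ∈ E, ∀ y ∈ E, p x y ≤ p (x * u) (y * u))
    (δ : ℝ≥0∞) (hδ : 0 < δ)
    (hQ : ∀ x ∈ E, δ ≤ hitProb p x (x * u))
    (g φ : G → ℝ≥0∞) (hgfin : ∀ x ∈ E, g x ≠ ⊤)
    (hpot : ∀ x ∈ E, g x = greenApp p φ x) :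
    ∀ x ∈ E,
      g (x * u) =
        greenApp p (fun z => g (z * u) - kapp p (fun w => g (w * u)) z) x := by
  intro x hx
  have hxu : x * u ∈ E := hEu x hx
  -- superharmonicity of h = T_u g
  have hsuper : ∀ z : G, kapp p (fun w => g (w * u)) z ≤ g (z * u) := by
    intro z
    by_cases hz : z ∈ E
    · have hzu : z * u ∈ E := hEu z hz
      calc kapp p (fun w => g (w * u)) z
          = Papp p 1 (fun w => g (w * u)) z := (Papp_one p _ z).symm
        _ ≤ Papp p 1 g (z * u) := Papp_mono_u p hsupp hmono g 1 z
        _ = Papp p 1 (greenApp p φ) (z * u) := by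
            refine tsum_congr fun y => ?_
            by_cases hy : kiter p 1 (z * u) y = 0
            · simp [hy]
            · rw [hpot y (kiter_mem p hsupp 1 (z * u) y hzu hy)]
        _ = ∑' m, Papp p (1 + m) φ (z * u) := Papp_green p 1 φ (z * u)
        _ ≤ ∑' m, Papp p m φ (z * u) := by
            refine ENNReal.summable.tsum_le_tsum_of_inj Nat.succ Nat.succ_injective
              (fun c _ => zero_le) (fun m => ?_) ENNReal.summable
            rw [Nat.add_comm 1 m]
        _ = greenApp p φ (z * u) := (green_tsum p φ (z * u)).symm
        _ = g (z * u) := (hpot _ hzu).symm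
    · have hzero : ∀ y, p z y * g (y * u) = 0 := by
        intro y
        by_cases hzy : p z y = 0
        · simp [hzy]
        · exact absurd (hsupp z y hzy).1 hz
      simp only [kapp]
      rw [tsum_congr hzero]
      simp
  -- the tail sums of the potential vanish
  have hGfin : ∑' m, Papp p m φ (x * u) ≠ ⊤ := by
    rw [← green_tsum, ← hpot _ hxu]
    exact hgfin _ hxu
  have htail : Tendsto (fun n => ∑' m, Papp p (n + m) φ (x * u)) atTop (nhds 0) := by
    have h1 := ENNReal.tendsto_sum_nat_add (fun m => Papp p m φ (x * u)) hGfin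
    refine h1.congr fun n => tsum_congr fun m => ?_
    rw [Nat.add_comm m n]
  have hPh0 : Tendsto (fun n => Papp p n (fun w => g (w * u)) x) atTop (nhds 0) := by
    refine tendsto_of_tendsto_of_tendsto_of_le_of_le tendsto_const_nhds htail
      (fun n => zero_le) (fun n => ?_)
    calc Papp p n (fun w => g (w * u)) x
        ≤ Papp p n g (x * u) := Papp_mono_u p hsupp hmono g n x
      _ = Papp p n (greenApp p φ) (x * u) := by
          refine tsum_congr fun y => ?_
          by_cases hy : kiter p n (x * u) y = 0
          · simp [hy]
          · rw [hpot y (kiter_mem p hsupp n (x * u) y hxu hy)]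
      _ = ∑' m, Papp p (n + m) φ (x * u) := Papp_green p n φ (x * u)
  -- telescoping identity
  have key : ∀ N : ℕ,
      (∑ n ∈ Finset.range N,
        Papp p n (fun z => g (z * u) - kapp p (fun w => g (w * u)) z) x) +
      Papp p N (fun w => g (w * u)) x = g (x * u) := by
    intro N
    induction N with
    | zero => simp [Papp_zero]
    | succ N ih =>
      rw [Finset.sum_range_succ, add_assoc]
      have step : Papp p N (fun z => g (z * u) - kapp p (fun w => g (w * u)) z) x +
          Papp p (N + 1) (fun w => g (w * u)) x =
          Papp p N (fun w => g (w * u)) x := by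
        rw [Papp_succ, ← Papp_comm]
        simp only [Papp]
        rw [← ENNReal.tsum_add]
        refine tsum_congr fun y => ?_
        rw [← mul_add, tsub_add_cancel_of_le (hsuper y)]
      rw [step, ih]
  -- pass to the limit
  have hT := ENNReal.tendsto_nat_tsum
    (fun n => Papp p n (fun z => g (z * u) - kapp p (fun w => g (w * u)) z) x)
  have hsum := hT.add hPh0
  rw [add_zero] at hsum
  have hconst : Tendsto (fun _ : ℕ => g (x * u)) atTop
      (nhds (∑' n, Papp p n (fun z => g (z * u) - kapp p (fun w => g (w * u)) z) x)) :=
    hsum.congr key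
  have := tendsto_nhds_unique hconst tendsto_const_nhds
  rw [green_tsum]
  exact this.symm
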